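/- Let (X^n, Y^n) be a pair of random vectors with values in {−1,1}^n × {−1,1}^n whose joint pmf p_{X^nY^n} satisfies D(p_{X^nY^n} ‖ p_{XY}^{⊗n}) ≤ ε, where p_{XY} is DSBS(q) for some 0 ≤ q ≤ 1. Then both of the following hold: (i) (1/(2 ln 2)) Σ_{i=1}^n ( E[X_i Y_i] − (1 − 2q) )² ≤ ε, and (ii) (1/(2 ln 2)) Σ_{i=1}^n ( E[X_i] )² ≤ ε. -/

import Mathlib

open Finset

/-- A probability mass function on a finite alphabet. -/
def IsPMF {α : Type*} [Fintype α] (p : α → ℝ) : Prop :=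
  (∀ a, 0 ≤ p a) ∧ ∑ a, p a = 1

/-- KL divergence in bits (finite-alphabet sum form, convention `0 · log 0 = 0`). -/
noncomputable def klDiv {α : Type*} [Fintype α] (p q : α → ℝ) : ℝ :=
  ∑ a, p a * Real.logb 2 (p a / q a)

/-- Encoding of the cube `{-1,1}` by `Bool`: `true ↦ 1`, `false ↦ -1`. -/
noncomputable def sgn (b : Bool) : ℝ := if b then 1 else -1

/-- The pmf of one DSBS(q) pair (values in the cube, encoded by `Bool`). -/
noncomputable def dsbsPair (q : ℝ) (uv : Bool × Bool) : ℝ :=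
  if uv.1 = uv.2 then (1 - q) / 2 else q / 2

lemma aux_div_sq (a b : ℝ) (ha : a ≠ 0) : (a * a - b * b) / a^2 - 1 = -(b/a)^2 := by
  field_simp
  ring

lemma hoeffding_two_point (q : ℝ) (hq0 : 0 ≤ q) (hq1 : q ≤ 1) (l : ℝ) :
    Real.log ((1 - q) * Real.exp l + q * Real.exp (-l)) ≤ (1 - 2*q) * l + l^2/2 := by
  set F : ℝ → ℝ := fun x => (1 - q) * Real.exp x + q * Real.exp (-x) with hF
  set F' : ℝ → ℝ := fun x => (1 - q) * Real.exp x - q * Real.exp (-x) with hF'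
  have hFpos : ∀ x, 0 < F x := by
    intro x
    have e1 := Real.exp_pos x
    have e2 := Real.exp_pos (-x)
    show 0 < (1 - q) * Real.exp x + q * Real.exp (-x)
    rcases lt_or_eq_of_le hq1 with h | h
    · nlinarith
    · rw [h]; nlinarith
  have hdF : ∀ x, HasDerivAt F (F' x) x := by
    intro x
    have h1 : HasDerivAt (fun x => Real.exp x) (Real.exp x) x := Real.hasDerivAt_exp x
    have h2 : HasDerivAt (fun x => Real.exp (-x)) (-Real.exp (-x)) x := by
      simpa [Function.comp_def] using (Real.hasDerivAt_exp (-x)).comp x (hasDerivAt_neg x)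
    simpa [hF, hF', mul_comm, sub_eq_add_neg, mul_neg, Pi.add_def] using ((h1.const_mul (1-q)).add (h2.const_mul q))
  have hdF' : ∀ x, HasDerivAt F' (F x) x := by
    intro x
    have h1 : HasDerivAt (fun x => Real.exp x) (Real.exp x) x := Real.hasDerivAt_exp x
    have h2 : HasDerivAt (fun x => Real.exp (-x)) (-Real.exp (-x)) x := by
      simpa [Function.comp_def] using (Real.hasDerivAt_exp (-x)).comp x (hasDerivAt_neg x)
    simpa [hF, hF', mul_comm, sub_eq_add_neg, mul_neg, neg_neg, Pi.add_def, Pi.neg_def] using ((h1.const_mul (1-q)).sub (h2.const_mul q))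
  set g : ℝ → ℝ := fun x => Real.log (F x) - (1 - 2*q) * x - x^2/2 with hg
  set g' : ℝ → ℝ := fun x => F' x / F x - (1 - 2*q) - x with hg'
  have hdg : ∀ x, HasDerivAt g (g' x) x := by
    intro x
    have hlog : HasDerivAt (fun x => Real.log (F x)) (F' x / F x) x := by
      simpa [div_eq_mul_inv, mul_comm] using (hdF x).log (hFpos x).ne'
    have hlin : HasDerivAt (fun x : ℝ => (1 - 2*q) * x) (1 - 2*q) x := by
      simpa using (hasDerivAt_id x).const_mul (1 - 2*q)
    have hsq : HasDerivAt (fun x : ℝ => x^2/2) x x := by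
      have := (hasDerivAt_pow 2 x).div_const 2
      simpa using this
    simpa [hg, hg', Pi.sub_def] using (hlog.sub hlin).sub hsq
  have hdg' : ∀ x, HasDerivAt g' (-(F' x / F x)^2) x := by
    intro x
    have hdiv : HasDerivAt (fun x => F' x / F x) ((F x * F x - F' x * F' x) / (F x)^2) x :=
      (hdF' x).div (hdF x) (hFpos x).ne'
    have h2 : HasDerivAt g' ((F x * F x - F' x * F' x) / (F x)^2 - 1) x := by
      simpa [hg', Pi.sub_def] using (hdiv.sub_const (1-2*q)).sub (hasDerivAt_id x)
    rw [← aux_div_sq (F x) (F' x) (hFpos x).ne']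
    exact h2
  have hg'anti : Antitone g' :=
    antitone_of_hasDerivAt_nonpos hdg' (fun x => neg_nonpos.mpr (sq_nonneg _))
  have hg'0 : g' 0 = 0 := by
    show F' 0 / F 0 - (1 - 2*q) - 0 = 0
    show ((1-q) * Real.exp 0 - q * Real.exp (-0)) / ((1-q) * Real.exp 0 + q * Real.exp (-0)) - (1 - 2*q) - 0 = 0
    norm_num
    ring
  have hg0 : g 0 = 0 := by
    show Real.log (F 0) - (1 - 2*q) * 0 - 0^2/2 = 0
    have : F 0 = 1 := by
      show (1-q) * Real.exp 0 + q * Real.exp (-0) = 1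
      norm_num
    rw [this]; norm_num
  have key : g l ≤ 0 := by
    rcases le_total 0 l with h | h
    · have hA : AntitoneOn g (Set.Ici 0) := by
        apply antitoneOn_of_hasDerivWithinAt_nonpos (convex_Ici 0) (f' := g')
        · exact fun x _ => (hdg x).continuousAt.continuousWithinAt
        · exact fun x _ => (hdg x).hasDerivWithinAt
        · intro x hx
          rw [interior_Ici] at hx
          have : g' x ≤ g' 0 := hg'anti (le_of_lt hx)
          linarith [hg'0 ▸ this]
      have := hA (Set.mem_Ici.2 le_rfl) (Set.mem_Ici.2 h) h
      linarith [hg0 ▸ this]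
    · have hM : MonotoneOn g (Set.Iic 0) := by
        apply monotoneOn_of_hasDerivWithinAt_nonneg (convex_Iic 0) (f' := g')
        · exact fun x _ => (hdg x).continuousAt.continuousWithinAt
        · exact fun x _ => (hdg x).hasDerivWithinAt
        · intro x hx
          rw [interior_Iic] at hx
          have : g' 0 ≤ g' x := hg'anti (le_of_lt hx)
          linarith [hg'0 ▸ this]
      have := hM (Set.mem_Iic.2 h) (Set.mem_Iic.2 le_rfl) h
      linarith [hg0 ▸ this]
  have : Real.log (F l) - (1 - 2*q) * l - l^2/2 ≤ 0 := key
  linarith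

lemma two_point_pos (q : ℝ) (hq0 : 0 ≤ q) (hq1 : q ≤ 1) (x : ℝ) :
    0 < (1 - q) * Real.exp x + q * Real.exp (-x) := by
  have e1 := Real.exp_pos x
  have e2 := Real.exp_pos (-x)
  rcases lt_or_eq_of_le hq1 with h | h
  · nlinarith
  · rw [h]; nlinarith

lemma gibbs_ineq {α : Type*} [Fintype α] (p r : α → ℝ) (hp0 : ∀ a, 0 ≤ p a)
    (hp1 : ∑ a, p a = 1) (hr0 : ∀ a, 0 ≤ r a) (hr1 : ∑ a, r a ≤ 1)
    (hab : ∀ a, r a = 0 → p a = 0) :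
    0 ≤ ∑ a, p a * Real.log (p a / r a) := by
  have key : ∀ a ∈ Finset.univ, p a - r a ≤ p a * Real.log (p a / r a) := by
    intro a _
    rcases eq_or_lt_of_le (hp0 a) with h | h
    · rw [← h]; simp; linarith [hr0 a]
    · have hr : 0 < r a := lt_of_le_of_ne (hr0 a) (fun h0 => by
        have := hab a h0.symm; linarith)
      have hlog : Real.log (r a / p a) ≤ r a / p a - 1 :=
        Real.log_le_sub_one_of_pos (div_pos hr h)
      have hneg : Real.log (p a / r a) = - Real.log (r a / p a) := by
        rw [← Real.log_inv]
        congr 1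
        rw [inv_div]
      have h2 : 1 - r a / p a ≤ Real.log (p a / r a) := by rw [hneg]; linarith
      have h3 := mul_le_mul_of_nonneg_left h2 h.le
      have h4 : p a * (1 - r a / p a) = p a - r a := by field_simp
      linarith [h4 ▸ h3]
  have hsum := Finset.sum_le_sum key
  rw [Finset.sum_sub_distrib, hp1] at hsum
  linarith

lemma dv_ineq {α : Type*} [Fintype α] (p Q : α → ℝ) (hp0 : ∀ a, 0 ≤ p a)
    (hp1 : ∑ a, p a = 1) (hQ0 : ∀ a, 0 ≤ Q a)
    (hab : ∀ a, Q a = 0 → p a = 0) (f : α → ℝ) :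
    ∑ a, p a * f a - Real.log (∑ a, Q a * Real.exp (f a)) ≤
      ∑ a, p a * Real.log (p a / Q a) := by
  set Z := ∑ a, Q a * Real.exp (f a) with hZdef
  have hZpos : 0 < Z := by
    obtain ⟨a, -, ha⟩ := Finset.exists_ne_zero_of_sum_ne_zero (by rw [hp1]; norm_num :
      ∑ a, p a ≠ 0)
    have hQa : 0 < Q a := lt_of_le_of_ne (hQ0 a) (fun h0 => ha (hab a h0.symm))
    exact Finset.sum_pos' (fun b _ => mul_nonneg (hQ0 b) (Real.exp_pos _).le)
      ⟨a, Finset.mem_univ a, mul_pos hQa (Real.exp_pos _)⟩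
  set r : α → ℝ := fun a => Q a * Real.exp (f a) / Z with hrdef
  have hr0 : ∀ a, 0 ≤ r a := fun a =>
    div_nonneg (mul_nonneg (hQ0 a) (Real.exp_pos _).le) hZpos.le
  have hr1 : ∑ a, r a ≤ 1 := by
    rw [hrdef]
    rw [← Finset.sum_div, ← hZdef, div_self hZpos.ne']
  have habr : ∀ a, r a = 0 → p a = 0 := by
    intro a h0
    apply hab
    have : Q a * Real.exp (f a) = 0 := by
      by_contra hne
      exact hne (by
        have := div_eq_zero_iff.mp h0
        rcases this with h | h
        · exact h
        · exact absurd h hZpos.ne')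
    rcases mul_eq_zero.mp this with h | h
    · exact h
    · exact absurd h (Real.exp_ne_zero _)
  have hg := gibbs_ineq p r hp0 hp1 hr0 hr1 habr
  have key : ∀ a, p a * Real.log (p a / r a) =
      p a * Real.log (p a / Q a) - p a * f a + p a * Real.log Z := by
    intro a
    rcases eq_or_lt_of_le (hp0 a) with h | h
    · rw [← h]; ring
    · have hQa : 0 < Q a := lt_of_le_of_ne (hQ0 a) (fun h0 => h.ne (hab a h0.symm).symm)
      have harg : p a / r a = (p a / Q a) * Z / Real.exp (f a) := by
        rw [hrdef]
        field_simp
      rw [harg, Real.log_div (by positivity) (Real.exp_ne_zero _),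
        Real.log_mul (by positivity) hZpos.ne', Real.log_exp]
      ring
  rw [Finset.sum_congr rfl (fun a _ => key a)] at hg
  have hsplit : ∑ a, (p a * Real.log (p a / Q a) - p a * f a + p a * Real.log Z) =
      (∑ a, p a * Real.log (p a / Q a)) - (∑ a, p a * f a) + Real.log Z := by
    rw [Finset.sum_add_distrib, Finset.sum_sub_distrib, ← Finset.sum_mul, hp1, one_mul]
  rw [hsplit] at hg
  linarith

lemma prod_sum_pairs (n : ℕ) (g : Fin n → Bool × Bool → ℝ) :
    ∑ xy : (Fin n → Bool) × (Fin n → Bool), ∏ i, g i (xy.1 i, xy.2 i) =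
      ∏ i, ∑ uv : Bool × Bool, g i uv := by
  rw [Finset.prod_univ_sum, Fintype.piFinset_univ]
  exact Fintype.sum_equiv (Equiv.arrowProdEquivProdArrow (Fin n) (fun _ => Bool) (fun _ => Bool)).symm _ _
    (fun z => rfl)

lemma dv_quadratic {α : Type*} [Fintype α] (p Q : α → ℝ) (hp0 : ∀ a, 0 ≤ p a)
    (hp1 : ∑ a, p a = 1) (hQ0 : ∀ a, 0 ≤ Q a)
    (hab : ∀ a, Q a = 0 → p a = 0)
    (n : ℕ) (s : Fin n → α → ℝ) (qt : ℝ) (hqt0 : 0 ≤ qt) (hqt1 : qt ≤ 1)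
    (hfac : ∀ L : Fin n → ℝ, ∑ a, Q a * Real.exp (∑ i, L i * s i a) =
      ∏ i, ((1 - qt) * Real.exp (L i) + qt * Real.exp (-(L i)))) :
    (1/2) * ∑ i, ((∑ a, s i a * p a) - (1 - 2*qt))^2 ≤
      ∑ a, p a * Real.log (p a / Q a) := by
  set θ : Fin n → ℝ := fun i => (∑ a, s i a * p a) - (1 - 2*qt) with hθ
  have hdv := dv_ineq p Q hp0 hp1 hQ0 hab (fun a => ∑ i, θ i * s i a)
  have hEf : ∑ a, p a * (∑ i, θ i * s i a) = ∑ i, θ i * (∑ a, s i a * p a) := by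
    simp_rw [Finset.mul_sum]
    rw [Finset.sum_comm]
    refine Finset.sum_congr rfl fun i _ => Finset.sum_congr rfl fun a _ => by ring
  rw [hEf, hfac θ] at hdv
  have hlog : Real.log (∏ i, ((1 - qt) * Real.exp (θ i) + qt * Real.exp (-(θ i)))) ≤
      ∑ i, ((1 - 2*qt) * θ i + (θ i)^2/2) := by
    rw [Real.log_prod (fun i _ => (two_point_pos qt hqt0 hqt1 (θ i)).ne')]
    exact Finset.sum_le_sum fun i _ => hoeffding_two_point qt hqt0 hqt1 (θ i)
  have hkey : (1/2) * ∑ i, (θ i)^2 =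
      (∑ i, θ i * (∑ a, s i a * p a)) - ∑ i, ((1 - 2*qt) * θ i + (θ i)^2/2) := by
    rw [Finset.mul_sum, ← Finset.sum_sub_distrib]
    refine Finset.sum_congr rfl fun i _ => ?_
    have hsum : ∑ a, s i a * p a = θ i + (1 - 2*qt) := by rw [hθ]; ring
    rw [hsum]; ring
  calc (1/2) * ∑ i, ((∑ a, s i a * p a) - (1 - 2*qt))^2
      = (1/2) * ∑ i, (θ i)^2 := rfl
    _ ≤ ∑ a, p a * Real.log (p a / Q a) := by rw [hkey]; linarith

/-- Lemma 9 of the paper: if `D(p_{X^nY^n} ‖ DSBS(q)^{⊗n}) ≤ ε` then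
(i) `(1/(2 ln 2)) Σ_i (E[X_iY_i] - (1-2q))² ≤ ε` and
(ii) `(1/(2 ln 2)) Σ_i (E[X_i])² ≤ ε`. -/
theorem stmt12 (q ε : ℝ) (hq0 : 0 ≤ q) (hq1 : q ≤ 1) (n : ℕ)
    (pJ : (Fin n → Bool) × (Fin n → Bool) → ℝ) (hpJ : IsPMF pJ)
    -- absolute continuity (implicit in `D ≤ ε < ∞` with the `+∞` convention)
    (habs : ∀ xy : (Fin n → Bool) × (Fin n → Bool),
      (∏ i, dsbsPair q (xy.1 i, xy.2 i)) = 0 → pJ xy = 0)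
    (hD : klDiv pJ (fun xy => ∏ i, dsbsPair q (xy.1 i, xy.2 i)) ≤ ε) :
    (1 / (2 * Real.log 2)) * (∑ i : Fin n,
        ((∑ xy : (Fin n → Bool) × (Fin n → Bool), sgn (xy.1 i) * sgn (xy.2 i) * pJ xy)
          - (1 - 2 * q)) ^ 2) ≤ ε ∧
    (1 / (2 * Real.log 2)) * (∑ i : Fin n,
        (∑ xy : (Fin n → Bool) × (Fin n → Bool), sgn (xy.1 i) * pJ xy) ^ 2) ≤ ε := by
  have hl2 : (0:ℝ) < Real.log 2 := Real.log_pos (by norm_num)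
  set Q : (Fin n → Bool) × (Fin n → Bool) → ℝ :=
    fun xy => ∏ i, dsbsPair q (xy.1 i, xy.2 i) with hQdef
  have hdsbs0 : ∀ uv : Bool × Bool, 0 ≤ dsbsPair q uv := by
    intro uv
    unfold dsbsPair
    split <;> linarith
  have hQ0 : ∀ xy, 0 ≤ Q xy := fun xy => Finset.prod_nonneg fun i _ => hdsbs0 _
  -- D in nats
  have hDnats : ∑ xy, pJ xy * Real.log (pJ xy / Q xy) ≤ Real.log 2 * ε := by
    have heq : ∑ xy, pJ xy * Real.log (pJ xy / Q xy) =
        Real.log 2 * klDiv pJ Q := by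
      rw [klDiv, Finset.mul_sum]
      refine Finset.sum_congr rfl fun a _ => ?_
      rw [Real.logb]
      field_simp
    rw [heq]
    exact mul_le_mul_of_nonneg_left hD hl2.le
  -- conversion of the bits goal
  have hconv : ∀ S : ℝ, (1/2) * S ≤ Real.log 2 * ε → (1 / (2 * Real.log 2)) * S ≤ ε := by
    intro S hS
    rw [one_div, inv_mul_le_iff₀ (by positivity)]
    linarith
  constructor
  · apply hconv
    have hfac : ∀ L : Fin n → ℝ,
        ∑ a : (Fin n → Bool) × (Fin n → Bool),
          Q a * Real.exp (∑ i, L i * (sgn (a.1 i) * sgn (a.2 i))) =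
        ∏ i, ((1 - q) * Real.exp (L i) + q * Real.exp (-(L i))) := by
      intro L
      have hpt : ∀ a : (Fin n → Bool) × (Fin n → Bool),
          Q a * Real.exp (∑ i, L i * (sgn (a.1 i) * sgn (a.2 i))) =
          ∏ i, (dsbsPair q (a.1 i, a.2 i) *
            Real.exp (L i * (sgn (a.1 i) * sgn (a.2 i)))) := by
        intro a
        rw [Real.exp_sum, Finset.prod_mul_distrib]
      rw [Finset.sum_congr rfl (fun a _ => hpt a)]
      rw [prod_sum_pairs n (fun i uv => dsbsPair q uv * Real.exp (L i * (sgn uv.1 * sgn uv.2)))]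
      refine Finset.prod_congr rfl fun i _ => ?_
      rw [Fintype.sum_prod_type]
      simp [dsbsPair, sgn]
      ring
    have := dv_quadratic pJ Q hpJ.1 hpJ.2 hQ0 habs n
      (fun i a => sgn (a.1 i) * sgn (a.2 i)) q hq0 hq1 hfac
    calc (1/2) * ∑ i : Fin n,
          ((∑ xy, sgn (xy.1 i) * sgn (xy.2 i) * pJ xy) - (1 - 2*q))^2
        = (1/2) * ∑ i : Fin n,
          ((∑ xy, (sgn (xy.1 i) * sgn (xy.2 i)) * pJ xy) - (1 - 2*q))^2 := by
          refine congrArg _ (Finset.sum_congr rfl fun i _ => ?_)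
          ring_nf
      _ ≤ ∑ xy, pJ xy * Real.log (pJ xy / Q xy) := this
      _ ≤ Real.log 2 * ε := hDnats
  · apply hconv
    have hfac : ∀ L : Fin n → ℝ,
        ∑ a : (Fin n → Bool) × (Fin n → Bool),
          Q a * Real.exp (∑ i, L i * sgn (a.1 i)) =
        ∏ i, ((1 - (1:ℝ)/2) * Real.exp (L i) + (1/2) * Real.exp (-(L i))) := by
      intro L
      have hpt : ∀ a : (Fin n → Bool) × (Fin n → Bool),
          Q a * Real.exp (∑ i, L i * sgn (a.1 i)) =
          ∏ i, (dsbsPair q (a.1 i, a.2 i) * Real.exp (L i * sgn (a.1 i))) := by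
        intro a
        rw [Real.exp_sum, Finset.prod_mul_distrib]
      rw [Finset.sum_congr rfl (fun a _ => hpt a)]
      rw [prod_sum_pairs n (fun i uv => dsbsPair q uv * Real.exp (L i * sgn uv.1))]
      refine Finset.prod_congr rfl fun i _ => ?_
      rw [Fintype.sum_prod_type]
      simp [dsbsPair, sgn]
      ring
    have := dv_quadratic pJ Q hpJ.1 hpJ.2 hQ0 habs n
      (fun i a => sgn (a.1 i)) (1/2) (by norm_num) (by norm_num) hfac
    have h0 : (1 - 2*((1:ℝ)/2)) = 0 := by norm_num
    rw [h0] at this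
    refine le_trans ?_ hDnats
    simpa using this
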